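/- Let p, q, m be real numbers with q > 0 and p > q. For x > 0 define z(x) = e^{1/(q x^q)} · x^{m-p} · ∫_0^x e^{-1/(q t^q)} · t^{p-q-1} dt (the integrand extended by 0 at t = 0). Then z is differentiable on (0,∞) and satisfies x^{q+1} · z′(x) + (p − m) · x^q · z(x) + z(x) = x^m for all x > 0. -/

import Mathlib

open MeasureTheory intervalIntegral Set Filter

theorem euler_ODE_section28 (p q m : ℝ) (hq : 0 < q) (hpq : q < p) :
    ∀ x : ℝ, 0 < x → ∃ d : ℝ,
      HasDerivAt
        (fun y : ℝ => Real.exp (1 / (q * y ^ q)) * y ^ (m - p) *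
          ∫ t in Set.Ioo (0 : ℝ) y, Real.exp (-1 / (q * t ^ q)) * t ^ (p - q - 1)) d x ∧
      x ^ (q + 1) * d +
        (p - m) * x ^ q *
          (Real.exp (1 / (q * x ^ q)) * x ^ (m - p) *
            ∫ t in Set.Ioo (0 : ℝ) x, Real.exp (-1 / (q * t ^ q)) * t ^ (p - q - 1)) +
        (Real.exp (1 / (q * x ^ q)) * x ^ (m - p) *
          ∫ t in Set.Ioo (0 : ℝ) x, Real.exp (-1 / (q * t ^ q)) * t ^ (p - q - 1)) =
      x ^ m := by
  intro x hx
  set g : ℝ → ℝ := fun t => Real.exp (-1 / (q * t ^ q)) * t ^ (p - q - 1) with hg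
  have hxq : (0:ℝ) < x ^ q := Real.rpow_pos_of_pos hx q
  have hqxq : q * x ^ q ≠ 0 := by positivity
  -- continuity of g on (0, ∞)
  have hcontAt : ∀ y : ℝ, 0 < y → ContinuousAt g y := by
    intro y hy
    have hcq : ContinuousAt (fun t : ℝ => t ^ q) y :=
      Real.continuousAt_rpow_const y q (Or.inl hy.ne')
    have hyq : q * y ^ q ≠ 0 := by
      have : (0:ℝ) < y ^ q := Real.rpow_pos_of_pos hy q
      positivity
    exact ((Real.continuous_exp.continuousAt.comp
        (ContinuousAt.div continuousAt_const (hcq.const_mul q) hyq))).mul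
      (Real.continuousAt_rpow_const y _ (Or.inl hy.ne'))
  have hcontOn : ContinuousOn g (Set.Ioi (0:ℝ)) :=
    fun y hy => (hcontAt y hy).continuousWithinAt
  -- interval integrability on [0, x]
  have hrpow : IntervalIntegrable (fun t : ℝ => t ^ (p - q - 1)) volume 0 x :=
    intervalIntegral.intervalIntegrable_rpow' (by linarith)
  have hint : IntervalIntegrable g volume 0 x := by
    have hmeas : MeasureTheory.AEStronglyMeasurable g
        (MeasureTheory.volume.restrict (Set.uIoc (0:ℝ) x)) := by
      rw [Set.uIoc_of_le hx.le]
      exact (hcontOn.mono Set.Ioc_subset_Ioi_self).aestronglyMeasurable measurableSet_Ioc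
    refine hrpow.mono_fun hmeas ?_
    filter_upwards [MeasureTheory.ae_restrict_mem measurableSet_uIoc] with t ht
    rw [Set.uIoc_of_le hx.le] at ht
    have ht0 : 0 < t := ht.1
    have hrp : (0:ℝ) ≤ t ^ (p - q - 1) := (Real.rpow_pos_of_pos ht0 _).le
    have he : Real.exp (-1 / (q * t ^ q)) ≤ 1 := by
      rw [Real.exp_le_one_iff]
      have : (0:ℝ) < q * t ^ q := by positivity
      rw [neg_div]
      simp [le_of_lt, this]
      positivity
    simp only [hg, Real.norm_eq_abs]
    rw [abs_of_nonneg (by positivity), abs_of_nonneg hrp]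
    exact mul_le_of_le_one_left hrp he
  -- FTC
  have hF : HasDerivAt (fun y => ∫ t in (0:ℝ)..y, g t) (g x) x :=
    intervalIntegral.integral_hasDerivAt_right hint
      (ContinuousOn.stronglyMeasurableAtFilter isOpen_Ioi hcontOn x hx) (hcontAt x hx)
  -- derivative of the outer factor
  have h1 : HasDerivAt (fun y : ℝ => y ^ q) (q * x ^ (q - 1)) x :=
    Real.hasDerivAt_rpow_const (Or.inl hx.ne')
  have hu : HasDerivAt (fun y : ℝ => 1 / (q * y ^ q))
      (-(q * (q * x ^ (q - 1))) / (q * x ^ q) ^ 2) x := by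
    simpa [one_div, Pi.inv_def] using ((h1.const_mul q).inv hqxq)
  have hE : HasDerivAt (fun y : ℝ => Real.exp (1 / (q * y ^ q)))
      (Real.exp (1 / (q * x ^ q)) * (-(q * (q * x ^ (q - 1))) / (q * x ^ q) ^ 2)) x := hu.exp
  have hP : HasDerivAt (fun y : ℝ => y ^ (m - p)) ((m - p) * x ^ (m - p - 1)) x :=
    Real.hasDerivAt_rpow_const (Or.inl hx.ne')
  have hA := hE.mul hP
  have hz := hA.mul hF
  -- replace the interval integral by the Ioo integral near x
  have heq : (fun y : ℝ => Real.exp (1 / (q * y ^ q)) * y ^ (m - p) *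
      ∫ t in Set.Ioo (0 : ℝ) y, g t)
      =ᶠ[nhds x] (fun y => Real.exp (1 / (q * y ^ q)) * y ^ (m - p) *
        ∫ t in (0:ℝ)..y, g t) := by
    filter_upwards [Ioi_mem_nhds hx] with y hy
    have hy0 : (0:ℝ) ≤ y := le_of_lt hy
    rw [intervalIntegral.integral_of_le hy0, MeasureTheory.integral_Ioc_eq_integral_Ioo]
  have hIoo : (∫ t in (0:ℝ)..x, g t) = ∫ t in Set.Ioo (0:ℝ) x, g t := by
    rw [intervalIntegral.integral_of_le hx.le, MeasureTheory.integral_Ioc_eq_integral_Ioo]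
  refine ⟨_, hz.congr_of_eventuallyEq heq, ?_⟩
  rw [hIoo]
  set I : ℝ := ∫ t in Set.Ioo (0:ℝ) x, g t with hI
  -- algebra
  have hEneg : Real.exp (-1 / (q * x ^ q)) = (Real.exp (1 / (q * x ^ q)))⁻¹ := by
    rw [neg_div, Real.exp_neg]
  have e1 : x ^ (q + 1) = x ^ q * x := by
    rw [Real.rpow_add hx, Real.rpow_one]
  have e2 : x ^ (m - p) = x ^ m / x ^ p := Real.rpow_sub hx m p
  have e3 : x ^ (m - p - 1) = x ^ m / x ^ p / x := by
    rw [Real.rpow_sub hx, Real.rpow_sub hx, Real.rpow_one]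
  have e4 : x ^ (p - q - 1) = x ^ p / x ^ q / x := by
    rw [Real.rpow_sub hx, Real.rpow_sub hx, Real.rpow_one]
  have e5 : x ^ (q - 1) = x ^ q / x := by
    rw [Real.rpow_sub hx, Real.rpow_one]
  have hxp : (0:ℝ) < x ^ p := Real.rpow_pos_of_pos hx p
  have hexp : Real.exp (1 / (q * x ^ q)) ≠ 0 := Real.exp_ne_zero _
  simp only [hg, Pi.mul_apply] at *
  rw [hEneg, e1, e2, e3, e4, e5]
  field_simp
  ring
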